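/- arXiv:2206.12793 — 3 statements merged into one kernel-verified Lean document; each statement's English description precedes it below -/
import Mathlib

section
/- The covariance matrix $\Sigma$ of the $(m-1)k$ indicators $(X_{i,c})_{1\le i\le m-1, 1\le c\le k}$ of the uniform random colouring equals the Kronecker product $B \otimes C$, where $B$ is the $k\times k$ matrix with $B_{cc} = \lambda_c(1-\lambda_c)$ and $B_{cc'} = -\lambda_c\lambda_{c'}$ for $c\ne c'$, and $C$ is the $(m-1)\times(m-1)$ matrix with $1$ on the diagonal and $-1/(m-1)$ off the diagonal; consequently $\det \Sigma = m^{-k}(1-1/m)^{-k(m-1)}\left(\prod_{i=0}^k \lambda_i\right)^{m-1}$. -/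
open Finset Kronecker

/-- The uniformly random colourings of `m` vertices with colour classes of
prescribed sizes `a c`. -/
def colourings (m k : ℕ) (a : Fin (k + 1) → ℕ) : Finset (Fin m → Fin (k + 1)) :=
  Finset.univ.filter fun f => ∀ c, (Finset.univ.filter fun i => f i = c).card = a c

/-- Expectation with respect to the uniform distribution on `colourings m k a`. -/
noncomputable def expec (m k : ℕ) (a : Fin (k + 1) → ℕ)
    (X : (Fin m → Fin (k + 1)) → ℝ) : ℝ :=
  (∑ f ∈ colourings m k a, X f) / (colourings m k a).card

/-- Indicator that vertex `i` receives colour `c`. -/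
def ind (m k : ℕ) (i : Fin m) (c : Fin (k + 1)) (f : Fin m → Fin (k + 1)) : ℝ :=
  if f i = c then 1 else 0

/-- Covariance of two random variables under the uniform random colouring. -/
noncomputable def cov (m k : ℕ) (a : Fin (k + 1) → ℕ)
    (X Y : (Fin m → Fin (k + 1)) → ℝ) : ℝ :=
  expec m k a (fun f => X f * Y f) - expec m k a X * expec m k a Y

section Aux

variable {m k : ℕ} {a : Fin (k+1) → ℕ}

lemma mem_colourings' {f : Fin m → Fin (k+1)} :
    f ∈ colourings m k a ↔ ∀ c, (Finset.univ.filter fun i => f i = c).card = a c := by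
  simp [colourings]

lemma comp_perm_mem' (σ : Equiv.Perm (Fin m))
    {f : Fin m → Fin (k+1)} (hf : f ∈ colourings m k a) : f ∘ σ ∈ colourings m k a := by
  rw [mem_colourings'] at hf ⊢
  intro c
  rw [← hf c]
  apply Finset.card_equiv σ
  intro i
  simp

lemma sum_comp_perm' (σ : Equiv.Perm (Fin m)) (X : (Fin m → Fin (k+1)) → ℝ) :
    ∑ f ∈ colourings m k a, X (f ∘ σ) = ∑ f ∈ colourings m k a, X f := by
  apply Finset.sum_nbij' (fun f => f ∘ σ) (fun f => f ∘ σ.symm)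
  · intro f hf; exact comp_perm_mem' σ hf
  · intro f hf; exact comp_perm_mem' σ.symm hf
  · intro f _; ext i; simp
  · intro f _; ext i; simp
  · intro f _; rfl

lemma colourings_nonempty' (hasum : ∑ c, a c = m) : (colourings m k a).Nonempty := by
  have hcard : Fintype.card (Σ c : Fin (k+1), Fin (a c)) = Fintype.card (Fin m) := by
    simp [Fintype.card_sigma, hasum]
  obtain e := Fintype.equivOfCardEq hcard
  refine ⟨fun i => (e.symm i).1, ?_⟩
  rw [mem_colourings']
  intro c
  have h1 : (Finset.univ.filter fun i => (e.symm i).fst = c).card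
      = Fintype.card {i : Fin m // (e.symm i).1 = c} := (Fintype.card_subtype _).symm
  have e2 : {i : Fin m // (e.symm i).1 = c} ≃ {s : Σ c' : Fin (k+1), Fin (a c') // s.1 = c} :=
    e.symm.subtypeEquiv fun i => Iff.rfl
  have e3 : {s : Σ c' : Fin (k+1), Fin (a c') // s.1 = c} ≃ Fin (a c) :=
    { toFun := fun s => Fin.cast (congrArg a s.2) s.1.2,
      invFun := fun x => ⟨⟨c, x⟩, rfl⟩,
      left_inv := by rintro ⟨⟨c', x⟩, rfl⟩; rfl,
      right_inv := fun x => rfl }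
  rw [h1, Fintype.card_congr (e2.trans e3), Fintype.card_fin]

lemma sum_ind_symm' (i i' : Fin m) (c : Fin (k+1)) :
    ∑ f ∈ colourings m k a, ind m k i c f = ∑ f ∈ colourings m k a, ind m k i' c f := by
  have := sum_comp_perm' (a := a) (Equiv.swap i i') (fun f => ind m k i c f)
  simp only [ind, Function.comp] at this ⊢
  rw [← this]
  apply Finset.sum_congr rfl
  intro f _
  simp [Equiv.swap_apply_left]

lemma sum_ind2_symm' (i j i' j' : Fin m) (hij : i ≠ j) (hij' : i' ≠ j') (c c' : Fin (k+1)) :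
    ∑ f ∈ colourings m k a, ind m k i c f * ind m k j c' f
      = ∑ f ∈ colourings m k a, ind m k i' c f * ind m k j' c' f := by
  set σ : Equiv.Perm (Fin m) := (Equiv.swap (Equiv.swap i i' j) j') * (Equiv.swap i i') with hσ
  have h1 : Equiv.swap i i' j ≠ i' := by
    intro h
    exact hij ((Equiv.swap i i').injective (by rw [h, Equiv.swap_apply_left]))
  have hσi : σ i = i' := by
    simp only [hσ, Equiv.Perm.mul_apply, Equiv.swap_apply_left]
    exact Equiv.swap_apply_of_ne_of_ne h1.symm hij'
  have hσj : σ j = j' := by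
    simp only [hσ, Equiv.Perm.mul_apply]
    exact Equiv.swap_apply_left _ _
  have := sum_comp_perm' (a := a) σ (fun f => ind m k i c f * ind m k j c' f)
  rw [← this]
  apply Finset.sum_congr rfl
  intro f _
  simp only [ind, Function.comp, hσi, hσj]

lemma sum_ind_inner' {f : Fin m → Fin (k+1)} (hf : f ∈ colourings m k a) (c : Fin (k+1)) :
    ∑ i, ind m k i c f = (a c : ℝ) := by
  rw [mem_colourings'] at hf
  simp only [ind]
  rw [Finset.sum_boole, hf c]

lemma ind_mul_ind_self' (i : Fin m) (c c' : Fin (k+1)) (f : Fin m → Fin (k+1)) :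
    ind m k i c f * ind m k i c' f = if c = c' then ind m k i c f else 0 := by
  rcases eq_or_ne c c' with rfl | hcc
  · by_cases h : f i = c <;> simp [ind, h]
  · by_cases h : f i = c
    · have h2 : f i ≠ c' := h ▸ hcc
      simp [ind, h, h2]
    · simp [ind, h]

lemma sum_ind_val' (i : Fin m) (c : Fin (k+1)) :
    (m : ℝ) * ∑ f ∈ colourings m k a, ind m k i c f
      = ((colourings m k a).card : ℝ) * a c := by
  have h1 : ∑ i' : Fin m, ∑ f ∈ colourings m k a, ind m k i' c f
      = (m:ℝ) * ∑ f ∈ colourings m k a, ind m k i c f := by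
    rw [Finset.sum_congr rfl (fun i' _ => sum_ind_symm' i' i c)]
    simp [Finset.sum_const, nsmul_eq_mul]
  rw [← h1, Finset.sum_comm, Finset.sum_congr rfl (fun f hf => sum_ind_inner' hf c)]
  simp [Finset.sum_const, nsmul_eq_mul]

lemma sum_ind2_val' (hm : 1 ≤ m) (i j : Fin m) (hij : i ≠ j) (c c' : Fin (k+1)) :
    ((m : ℝ) * ((m:ℝ) - 1)) * ∑ f ∈ colourings m k a, ind m k i c f * ind m k j c' f
      = ((colourings m k a).card : ℝ) *
        ((a c : ℝ) * a c' - if c = c' then (a c : ℝ) else 0) := by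
  have key : ∑ i' : Fin m, ∑ j' ∈ Finset.univ.erase i',
      ∑ f ∈ colourings m k a, ind m k i' c f * ind m k j' c' f
      = ((m : ℝ) * ((m:ℝ) - 1)) * ∑ f ∈ colourings m k a, ind m k i c f * ind m k j c' f := by
    have hcongr : ∀ i' : Fin m, ∀ j' ∈ Finset.univ.erase i',
        ∑ f ∈ colourings m k a, ind m k i' c f * ind m k j' c' f
        = ∑ f ∈ colourings m k a, ind m k i c f * ind m k j c' f := fun i' j' hj' =>
      sum_ind2_symm' i' j' i j (Finset.ne_of_mem_erase hj').symm hij c c'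
    rw [Finset.sum_congr rfl (fun i' _ => Finset.sum_congr rfl (hcongr i'))]
    simp only [Finset.sum_const, Finset.card_erase_of_mem (Finset.mem_univ _),
      Finset.card_univ, Fintype.card_fin, nsmul_eq_mul, Nat.cast_sub hm, Nat.cast_one]
    ring
  rw [← key, Finset.sum_congr rfl (fun (i' : Fin m) (_ : i' ∈ Finset.univ) => Finset.sum_comm),
    Finset.sum_comm]
  have h3 : ∀ f ∈ colourings m k a,
      ∑ i' : Fin m, ∑ j' ∈ Finset.univ.erase i', ind m k i' c f * ind m k j' c' f
      = (a c : ℝ) * a c' - if c = c' then (a c : ℝ) else 0 := by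
    intro f hf
    have hinner : ∀ i' : Fin m, ∑ j' ∈ Finset.univ.erase i', ind m k i' c f * ind m k j' c' f
        = ind m k i' c f * (a c' : ℝ) - (if c = c' then ind m k i' c f else 0) := by
      intro i'
      rw [Finset.sum_erase_eq_sub (Finset.mem_univ i'), ← Finset.mul_sum, sum_ind_inner' hf,
        ind_mul_ind_self']
    rw [Finset.sum_congr rfl (fun i' _ => hinner i'), Finset.sum_sub_distrib,
      ← Finset.sum_mul, sum_ind_inner' hf]
    congr 1
    by_cases hcc : c = c' <;> simp [hcc, sum_ind_inner' hf]
  rw [Finset.sum_congr rfl h3]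
  simp [Finset.sum_const, nsmul_eq_mul]
  split_ifs <;> ring

lemma expec_ind' (hm : 1 ≤ m) (hne : (colourings m k a).Nonempty)
    {lam : Fin (k+1) → ℝ} (ha : ∀ c, (a c : ℝ) = lam c * m) (i : Fin m) (c : Fin (k+1)) :
    expec m k a (ind m k i c) = lam c := by
  have hm0 : (m:ℝ) ≠ 0 := Nat.cast_ne_zero.mpr (by omega)
  have hN : ((colourings m k a).card : ℝ) ≠ 0 := by
    exact_mod_cast (Finset.card_pos.mpr hne).ne'
  have h := sum_ind_val' (a := a) i c
  rw [ha c] at h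
  rw [expec, div_eq_iff hN]
  apply mul_left_cancel₀ hm0
  rw [h]; ring

lemma expec_ind2' (hm : 2 ≤ m) (hne : (colourings m k a).Nonempty)
    {lam : Fin (k+1) → ℝ} (ha : ∀ c, (a c : ℝ) = lam c * m) (i j : Fin m) (hij : i ≠ j)
    (c c' : Fin (k+1)) :
    expec m k a (fun f => ind m k i c f * ind m k j c' f)
      = (lam c * lam c' * m - (if c = c' then lam c else 0)) / ((m:ℝ) - 1) := by
  have hm0 : (m:ℝ) ≠ 0 := Nat.cast_ne_zero.mpr (by omega)
  have hm2 : (2:ℝ) ≤ (m:ℝ) := by exact_mod_cast hm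
  have hm1 : (m:ℝ) - 1 ≠ 0 := by linarith
  have hN : ((colourings m k a).card : ℝ) ≠ 0 := by
    exact_mod_cast (Finset.card_pos.mpr hne).ne'
  have h := sum_ind2_val' (a := a) (le_trans one_le_two hm) i j hij c c'
  rw [ha c, ha c'] at h
  have hEm : (if c = c' then lam c * (m:ℝ) else 0) = (if c = c' then lam c else 0) * (m:ℝ) := by
    by_cases hcc : c = c' <;> simp [hcc]
  rw [hEm] at h
  set E : ℝ := (if c = c' then lam c else 0) with hE
  rw [expec, div_eq_iff hN]
  apply mul_left_cancel₀ (mul_ne_zero hm0 hm1)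
  rw [h]
  field_simp

lemma expec_ind2_self' (hm : 1 ≤ m) (hne : (colourings m k a).Nonempty)
    {lam : Fin (k+1) → ℝ} (ha : ∀ c, (a c : ℝ) = lam c * m) (i : Fin m) (c c' : Fin (k+1)) :
    expec m k a (fun f => ind m k i c f * ind m k i c' f)
      = if c = c' then lam c else 0 := by
  have h0 : expec m k a (fun f => ind m k i c f * ind m k i c' f)
      = expec m k a (fun f => if c = c' then ind m k i c f else 0) := by
    unfold expec
    congr 1
    exact Finset.sum_congr rfl fun f _ => ind_mul_ind_self' i c c' f
  rw [h0]
  by_cases hcc : c = c'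
  · simp only [hcc, if_true]
    exact expec_ind' hm hne ha i c'
  · simp only [hcc, if_false]
    simp [expec]

lemma cov_ind' (hm : 2 ≤ m) (hne : (colourings m k a).Nonempty)
    {lam : Fin (k+1) → ℝ} (ha : ∀ c, (a c : ℝ) = lam c * m) (i j : Fin m)
    (c c' : Fin (k+1)) :
    cov m k a (ind m k i c) (ind m k j c') =
      ((if c = c' then lam c else 0) - lam c * lam c') *
        (if i = j then 1 else -(1 / ((m:ℝ) - 1))) := by
  have hm2 : (2:ℝ) ≤ (m:ℝ) := by exact_mod_cast hm
  have hm1 : (m:ℝ) - 1 ≠ 0 := by linarith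
  have hm1' : 1 ≤ m := le_trans one_le_two hm
  rcases eq_or_ne i j with rfl | hij
  · rw [cov, expec_ind2_self' hm1' hne ha, expec_ind' hm1' hne ha, expec_ind' hm1' hne ha]
    simp
  · rw [cov, expec_ind2' hm hne ha i j hij, expec_ind' hm1' hne ha, expec_ind' hm1' hne ha,
      if_neg hij]
    field_simp
    ring

open Matrix in
lemma detB' {k : ℕ} (lam : Fin (k+1) → ℝ) (hsum : ∑ c, lam c = 1)
    (B : Matrix (Fin k) (Fin k) ℝ)
    (hB : ∀ c c', B c c' = if c = c' then lam c.succ * (1 - lam c.succ)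
        else -(lam c.succ * lam c'.succ)) :
    B.det = ∏ c, lam c := by
  have hfac : B = Matrix.diagonal (fun c => lam c.succ) *
      (1 + Matrix.replicateCol Unit (fun _ => (1:ℝ)) * Matrix.replicateRow Unit (fun c => -lam c.succ)) := by
    ext c c'
    rw [hB, Matrix.diagonal_mul]
    rcases eq_or_ne c c' with rfl | hcc
    · rw [if_pos rfl]
      simp only [Matrix.add_apply, Matrix.one_apply_eq, Matrix.mul_apply, Finset.univ_unique,
        Finset.sum_singleton, Matrix.replicateCol_apply, Matrix.replicateRow_apply]
      ring
    · simp [Matrix.mul_apply, Matrix.one_apply, hcc]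
  rw [hfac, Matrix.det_mul, Matrix.det_diagonal, Matrix.det_one_add_replicateCol_mul_replicateRow]
  have hdot : (fun c => -lam (Fin.succ c)) ⬝ᵥ (fun _ => (1:ℝ)) = -(1 - lam 0) := by
    have h2 : ∑ x : Fin k, lam x.succ = 1 - lam 0 := by
      rw [← hsum, Fin.sum_univ_succ]; ring
    simp only [dotProduct, mul_one]
    rw [Finset.sum_neg_distrib, h2]
  rw [hdot, Fin.prod_univ_succ]
  ring

open Matrix in
lemma detC' {m : ℕ} (hm : 2 ≤ m)
    (C : Matrix (Fin (m-1)) (Fin (m-1)) ℝ)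
    (hC : ∀ i i', C i i' = if i = i' then (1 : ℝ) else -(1 / ((m : ℝ) - 1))) :
    C.det = ((m:ℝ) / ((m:ℝ) - 1)) ^ (m - 1) * (1 / (m:ℝ)) := by
  have hm2 : (2:ℝ) ≤ (m:ℝ) := by exact_mod_cast hm
  have hm0 : (m:ℝ) ≠ 0 := by linarith
  have hm1 : (m:ℝ) - 1 ≠ 0 := by linarith
  have hfac : C = ((m:ℝ) / ((m:ℝ) - 1)) •
      (1 + Matrix.replicateCol Unit (fun _ => (1:ℝ)) * Matrix.replicateRow Unit (fun _ => -(1/(m:ℝ)))) := by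
    ext i i'
    rw [hC]
    rcases eq_or_ne i i' with rfl | hii
    · simp [Matrix.mul_apply, Matrix.one_apply]
      field_simp
      ring
    · simp [Matrix.mul_apply, Matrix.one_apply, hii]
      field_simp
  rw [hfac, Matrix.det_smul, Matrix.det_one_add_replicateCol_mul_replicateRow, Fintype.card_fin]
  have hcast : ((m - 1 : ℕ) : ℝ) = (m:ℝ) - 1 := by
    rw [Nat.cast_sub (by omega)]; simp
  have hdot : (fun _ : Fin (m-1) => -(1/(m:ℝ))) ⬝ᵥ (fun _ => (1:ℝ)) = -(((m:ℝ)-1)/(m:ℝ)) := by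
    simp [dotProduct, Finset.sum_const, hcast]
    field_simp
  rw [hdot]
  field_simp
  ring

end Aux

/-- The covariance matrix of the indicators `(X_{i,c})` (omitting `i = m` and
`c = 0`) is the Kronecker product `B ⊗ₖ C`, and its determinant is
`m^{-k} (1-1/m)^{-k(m-1)} (∏ λ_i)^{m-1}`. -/
theorem stmt_16 (m k : ℕ) (hm : 2 ≤ m) (hk : 1 ≤ k)
    (lam : Fin (k + 1) → ℝ) (hpos : ∀ c, 0 < lam c) (hsum : ∑ c, lam c = 1)
    (a : Fin (k + 1) → ℕ) (hapos : ∀ c, 0 < a c)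
    (ha : ∀ c, (a c : ℝ) = lam c * m) (hasum : ∑ c, a c = m)
    (Sigma : Matrix (Fin k × Fin (m - 1)) (Fin k × Fin (m - 1)) ℝ)
    (hSigma : ∀ p q, Sigma p q =
        cov m k a (ind m k (Fin.castLE (Nat.sub_le m 1) p.2) p.1.succ)
          (ind m k (Fin.castLE (Nat.sub_le m 1) q.2) q.1.succ))
    (B : Matrix (Fin k) (Fin k) ℝ)
    (hB : ∀ c c', B c c' = if c = c' then lam c.succ * (1 - lam c.succ)
        else -(lam c.succ * lam c'.succ))
    (C : Matrix (Fin (m - 1)) (Fin (m - 1)) ℝ)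
    (hC : ∀ i i', C i i' = if i = i' then (1 : ℝ) else -(1 / ((m : ℝ) - 1))) :
    Sigma = B ⊗ₖ C
      ∧ Sigma.det = (m : ℝ) ^ (-(k : ℤ)) *
          (1 - 1 / (m : ℝ)) ^ (-(k * (m - 1) : ℤ)) *
          (∏ c, lam c) ^ (m - 1) := by
  have hne : (colourings m k a).Nonempty := colourings_nonempty' hasum
  have h1 : Sigma = B ⊗ₖ C := by
    ext p q
    rw [hSigma, cov_ind' hm hne ha, Matrix.kroneckerMap_apply, hB, hC]
    congr 1
    · rcases eq_or_ne p.1 q.1 with hpq | hpq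
      · rw [if_pos hpq, if_pos (by rw [hpq]), hpq]
        ring
      · rw [if_neg hpq, if_neg (fun h => hpq (Fin.succ_inj.mp h))]
        ring
    · rcases eq_or_ne p.2 q.2 with hpq | hpq
      · rw [if_pos hpq, if_pos (by rw [hpq])]
      · rw [if_neg hpq, if_neg (fun h => hpq (Fin.castLE_injective _ h))]
  refine ⟨h1, ?_⟩
  rw [h1, Matrix.det_kronecker, Fintype.card_fin, Fintype.card_fin,
    detB' lam hsum B hB, detC' hm C hC]
  have hm2 : (2:ℝ) ≤ (m:ℝ) := by exact_mod_cast hm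
  have hx0 : (m:ℝ) ≠ 0 := by linarith
  have hx1 : (m:ℝ) - 1 ≠ 0 := by linarith
  have hfrac : 1 - 1/(m:ℝ) = ((m:ℝ)-1)/(m:ℝ) := by field_simp
  have hz : ((k:ℤ) * ((m:ℤ) - 1)) = ((k * (m-1) : ℕ) : ℤ) := by
    push_cast [Nat.cast_sub (show 1 ≤ m by omega)]
    ring
  rw [zpow_neg, zpow_neg, zpow_natCast, hz, zpow_natCast, hfrac]
  have key : ((((m:ℝ) - 1) / (m:ℝ)) ^ (k * (m - 1)))⁻¹ = (((m:ℝ) / ((m:ℝ)-1)) ^ (m-1))^k := by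
    rw [← inv_pow, inv_div, mul_comm k (m-1), pow_mul]
  rw [key, mul_pow, one_div]
  ring
end

section
/- Let $Z \ge 2$ be an integer, and let real sequences $A(i) \ge 0$ and $B(i)$ with $1-(i-1)B(i) \ge 0$ for $1 \le i \le Z$ be given. Define $n_0 = 1$ and $n_i = n_{i-1} \cdot \frac{1}{i} A(i)(1-(i-1)B(i))$. Set $A_2 = \max_i A(i)$, $C_1 = \min_i A(i)B(i)$, and suppose $0 < \hat c < 1/3$ satisfies $\max\{A/Z, |C|\} \le \hat c$ for all $A \in [\min_i A(i), A_2]$ and $C \in [C_1, \max_i A(i)B(i)]$. Then $\sum_{i=0}^Z n_i \le \exp\left(A_2 - \tfrac12 A_2 C_1 + \tfrac12 A_2 C_1^2\right) + (2e\hat c)^Z$. -/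
open Finset

section GMWAux

lemma lemA : ∀ (n : ℕ) (α x : ℝ), (n : ℝ) ≤ α → 0 ≤ x →
    ∑ i ∈ range (n+1), (∏ j ∈ range i, (α - (j:ℝ))) * x^i / (i.factorial : ℝ) ≤ (1+x) ^ α := by
  intro n
  induction n with
  | zero =>
    intro α x hα hx
    have h1 : (1:ℝ) ≤ (1+x)^α := Real.one_le_rpow (by linarith) (by exact_mod_cast hα)
    simpa using h1
  | succ n ih =>
    intro α x hα hx
    push_cast at hα
    have hα0 : (0:ℝ) < α := by linarith [Nat.cast_nonneg (α := ℝ) n]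
    set F : ℝ → ℝ := fun y => (1+y)^α - ∑ i ∈ range (n+2), (∏ j ∈ range i, (α - (j:ℝ))) * y^i / (i.factorial : ℝ) with hFdef
    have hd : ∀ y : ℝ, 0 ≤ y → HasDerivAt F
        (α * ((1+y)^(α-1) - ∑ i ∈ range (n+1), (∏ j ∈ range i, (α - 1 - (j:ℝ))) * y^i / (i.factorial : ℝ))) y := by
      intro y hy
      have h1 : HasDerivAt (fun y : ℝ => (1+y)^α) (α * (1+y)^(α-1)) y := by
        have := ((hasDerivAt_id y).const_add 1).rpow_const (p := α) (Or.inl (by positivity))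
        simpa using this
      have h2 : HasDerivAt (fun y : ℝ => ∑ i ∈ range (n+2), (∏ j ∈ range i, (α - (j:ℝ))) * y^i / (i.factorial : ℝ))
          (∑ i ∈ range (n+2), (∏ j ∈ range i, (α - (j:ℝ))) / (i.factorial : ℝ) * ((i:ℝ) * y^(i-1))) y := by
        have heq : (fun y : ℝ => ∑ i ∈ range (n+2), (∏ j ∈ range i, (α - (j:ℝ))) * y^i / (i.factorial : ℝ))
            = fun y : ℝ => ∑ i ∈ range (n+2), (∏ j ∈ range i, (α - (j:ℝ))) / (i.factorial : ℝ) * y^i := by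
          funext y; exact Finset.sum_congr rfl fun i _ => by ring
        rw [heq]
        exact HasDerivAt.fun_sum fun i _ => (hasDerivAt_pow i y).const_mul _
      have h3 : ∑ i ∈ range (n+2), (∏ j ∈ range i, (α - (j:ℝ))) / (i.factorial : ℝ) * ((i:ℝ) * y^(i-1))
          = α * ∑ i ∈ range (n+1), (∏ j ∈ range i, (α - 1 - (j:ℝ))) * y^i / (i.factorial : ℝ) := by
        rw [Finset.sum_range_succ']
        simp only [Nat.cast_zero, zero_mul, mul_zero, add_zero, Finset.mul_sum]
        apply Finset.sum_congr rfl
        intro i _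
        have hp : ∏ j ∈ range (i+1), (α - (j:ℝ)) = (∏ j ∈ range i, (α - 1 - (j:ℝ))) * α := by
          rw [Finset.prod_range_succ']
          congr 1
          · exact Finset.prod_congr rfl fun j _ => by push_cast; ring
          · simp
        rw [hp, Nat.factorial_succ]
        have hfac : ((i+1).factorial : ℝ) ≠ 0 := by positivity
        push_cast
        field_simp
      have := (h1.fun_sub h2)
      rw [h3] at this
      exact this.congr_deriv (by ring)
    have hmono : MonotoneOn F (Set.Icc 0 x) := by
      apply monotoneOn_of_deriv_nonneg (convex_Icc 0 x)
      · intro y hy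
        exact (hd y hy.1).continuousAt.continuousWithinAt
      · rw [interior_Icc]
        intro y hy
        exact (hd y hy.1.le).differentiableAt.differentiableWithinAt
      · rw [interior_Icc]
        intro y hy
        rw [(hd y hy.1.le).deriv]
        have hIH := ih (α - 1) y (by linarith) hy.1.le
        have : (0:ℝ) ≤ (1+y)^(α-1) - ∑ i ∈ range (n+1), (∏ j ∈ range i, (α - 1 - (j:ℝ))) * y^i / (i.factorial : ℝ) := by
          linarith
        positivity
    have hF0 : F 0 = 0 := by
      simp only [hFdef, add_zero, Real.one_rpow]
      rw [Finset.sum_range_succ']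
      simp
    have hFx : F 0 ≤ F x := hmono (Set.left_mem_Icc.2 hx) (Set.right_mem_Icc.2 hx) hx
    rw [hF0] at hFx
    simp only [hFdef] at hFx
    linarith


lemma lemB : ∀ (n : ℕ) (β x : ℝ), 0 ≤ β → 0 ≤ x → x < 1 →
    ∑ i ∈ range (n+1), (∏ j ∈ range i, (β + (j:ℝ))) * x^i / (i.factorial : ℝ) ≤ (1-x) ^ (-β) := by
  intro n
  induction n with
  | zero =>
    intro β x hβ hx hx1
    have h1 : (1:ℝ) ≤ (1-x)^(-β) :=
      Real.one_le_rpow_of_pos_of_le_one_of_nonpos (by linarith) (by linarith) (by linarith)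
    simpa using h1
  | succ n ih =>
    intro β x hβ hx hx1
    set F : ℝ → ℝ := fun y => (1-y)^(-β) - ∑ i ∈ range (n+2), (∏ j ∈ range i, (β + (j:ℝ))) * y^i / (i.factorial : ℝ) with hFdef
    have hd : ∀ y : ℝ, y < 1 → HasDerivAt F
        (β * ((1-y)^(-(β+1)) - ∑ i ∈ range (n+1), (∏ j ∈ range i, (β + 1 + (j:ℝ))) * y^i / (i.factorial : ℝ))) y := by
      intro y hy
      have h1 : HasDerivAt (fun y : ℝ => (1-y)^(-β)) (β * (1-y)^(-(β+1))) y := by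
        have hne : (1:ℝ) - y ≠ 0 := by intro h; nlinarith
        have h0 : HasDerivAt (fun y : ℝ => 1 - y) (-1 : ℝ) y := by
          exact (hasDerivAt_id' y).const_sub (1:ℝ)
        have := h0.rpow_const (p := -β) (Or.inl hne)
        have heq : (-1 : ℝ) * (-β) * (1-y)^(-β-1) = β * (1-y)^(-(β+1)) := by
          rw [show -β - 1 = -(β+1) by ring]; ring
        rw [heq] at this
        exact this
      have h2 : HasDerivAt (fun y : ℝ => ∑ i ∈ range (n+2), (∏ j ∈ range i, (β + (j:ℝ))) * y^i / (i.factorial : ℝ))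
          (∑ i ∈ range (n+2), (∏ j ∈ range i, (β + (j:ℝ))) / (i.factorial : ℝ) * ((i:ℝ) * y^(i-1))) y := by
        have heq : (fun y : ℝ => ∑ i ∈ range (n+2), (∏ j ∈ range i, (β + (j:ℝ))) * y^i / (i.factorial : ℝ))
            = fun y : ℝ => ∑ i ∈ range (n+2), (∏ j ∈ range i, (β + (j:ℝ))) / (i.factorial : ℝ) * y^i := by
          funext y; exact Finset.sum_congr rfl fun i _ => by ring
        rw [heq]
        exact HasDerivAt.fun_sum fun i _ => (hasDerivAt_pow i y).const_mul _
      have h3 : ∑ i ∈ range (n+2), (∏ j ∈ range i, (β + (j:ℝ))) / (i.factorial : ℝ) * ((i:ℝ) * y^(i-1))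
          = β * ∑ i ∈ range (n+1), (∏ j ∈ range i, (β + 1 + (j:ℝ))) * y^i / (i.factorial : ℝ) := by
        rw [Finset.sum_range_succ']
        simp only [Nat.cast_zero, zero_mul, mul_zero, add_zero, Finset.mul_sum]
        apply Finset.sum_congr rfl
        intro i _
        have hp : ∏ j ∈ range (i+1), (β + (j:ℝ)) = (∏ j ∈ range i, (β + 1 + (j:ℝ))) * β := by
          rw [Finset.prod_range_succ']
          congr 1
          · exact Finset.prod_congr rfl fun j _ => by push_cast; ring
          · simp
        rw [hp, Nat.factorial_succ]
        have hfac : ((i+1).factorial : ℝ) ≠ 0 := by positivity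
        push_cast
        field_simp
      have := (h1.fun_sub h2)
      rw [h3] at this
      exact this.congr_deriv (by ring)
    have hmono : MonotoneOn F (Set.Icc 0 x) := by
      apply monotoneOn_of_deriv_nonneg (convex_Icc 0 x)
      · intro y hy
        exact (hd y (lt_of_le_of_lt hy.2 hx1)).continuousAt.continuousWithinAt
      · rw [interior_Icc]
        intro y hy
        exact (hd y (lt_trans hy.2 hx1)).differentiableAt.differentiableWithinAt
      · rw [interior_Icc]
        intro y hy
        rw [(hd y (lt_trans hy.2 hx1)).deriv]
        have hIH := ih (β + 1) y (by linarith) hy.1.le (lt_trans hy.2 hx1)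
        have : (0:ℝ) ≤ (1-y)^(-(β+1)) - ∑ i ∈ range (n+1), (∏ j ∈ range i, (β + 1 + (j:ℝ))) * y^i / (i.factorial : ℝ) := by
          linarith
        positivity
    have hF0 : F 0 = 0 := by
      simp only [hFdef, sub_zero, Real.one_rpow]
      rw [Finset.sum_range_succ']
      simp
    have hFx : F 0 ≤ F x := hmono (Set.left_mem_Icc.2 hx) (Set.right_mem_Icc.2 hx) hx
    rw [hF0] at hFx
    simp only [hFdef] at hFx
    linarith


lemma logA {c : ℝ} (h0 : 0 ≤ c) (h3 : c ≤ 1/3) : Real.log (1+c) ≤ c - c^2/2 + c^3/2 := by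
  have habs : |(-c)| < 1 := by rw [abs_neg, abs_of_nonneg h0]; linarith
  have h := Real.abs_log_sub_add_sum_range_le habs 6
  have hS : ∑ i ∈ range 6, (-c)^(i+1)/((i:ℝ)+1) = -c + c^2/2 - c^3/3 + c^4/4 - c^5/5 + c^6/6 := by
    simp [Finset.sum_range_succ]
    ring
  rw [hS] at h
  rw [show (1 : ℝ) - -c = 1 + c by ring] at h
  rw [abs_neg, abs_of_nonneg h0] at h
  have hd : c^7/(1-c) ≤ (3/2) * c^7 := by
    rw [div_le_iff₀ (by linarith)]
    nlinarith [pow_nonneg h0 7]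
  have h' := (abs_le.1 h).2
  nlinarith [pow_nonneg h0 3, pow_nonneg h0 4, pow_nonneg h0 5, pow_nonneg h0 6, pow_nonneg h0 7,
    mul_le_of_le_one_left (pow_nonneg h0 4) (by linarith : c ≤ 1),
    pow_le_pow_left₀ h0 h3 4, pow_le_pow_left₀ h0 h3 5, pow_le_pow_left₀ h0 h3 6, pow_le_pow_left₀ h0 h3 7]

lemma logB {d : ℝ} (h0 : 0 ≤ d) (h3 : d ≤ 1/3) : -(d + d^2/2 + d^3/2) ≤ Real.log (1-d) := by
  have habs : |d| < 1 := by rw [abs_of_nonneg h0]; linarith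
  have h := Real.abs_log_sub_add_sum_range_le habs 6
  have hS : ∑ i ∈ range 6, d^(i+1)/((i:ℝ)+1) = d + d^2/2 + d^3/3 + d^4/4 + d^5/5 + d^6/6 := by
    simp [Finset.sum_range_succ]
    ring
  rw [hS, abs_of_nonneg h0] at h
  have hd : d^7/(1-d) ≤ (3/2) * d^7 := by
    rw [div_le_iff₀ (by linarith)]
    nlinarith [pow_nonneg h0 7]
  have h' := (abs_le.1 h).1
  norm_num at h'
  have p4 : d^4 ≤ d^3 * (1/3) := by nlinarith [pow_nonneg h0 3]
  have p5 : d^5 ≤ d^3 * (1/9) := by nlinarith [pow_nonneg h0 3, pow_nonneg h0 4]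
  have p6 : d^6 ≤ d^3 * (1/27) := by nlinarith [pow_nonneg h0 3, pow_nonneg h0 4, pow_nonneg h0 5]
  have p7 : d^7 ≤ d^3 * (1/81) := by
    nlinarith [pow_nonneg h0 3, pow_nonneg h0 4, pow_nonneg h0 5, pow_nonneg h0 6]
  linarith [pow_nonneg h0 3]

lemma pow_div_fact_le (Z : ℕ) : (Z:ℝ)^Z / (Z.factorial : ℝ) ≤ Real.exp 1 ^ Z := by
  have h1 : (Z:ℝ)^Z / (Z.factorial : ℝ) ≤ Real.exp Z := by
    rw [div_le_iff₀ (by positivity)]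
    calc (Z:ℝ)^Z = (Z:ℝ)^Z / (Z.factorial:ℝ) * (Z.factorial:ℝ) := by field_simp
    _ ≤ (∑ i ∈ range (Z+1), (Z:ℝ)^i / (i.factorial:ℝ)) * (Z.factorial:ℝ) := by
        apply mul_le_mul_of_nonneg_right _ (by positivity)
        exact Finset.single_le_sum (f := fun i => (Z:ℝ)^i / (i.factorial:ℝ))
          (fun i _ => by positivity) (self_mem_range_succ Z)
    _ ≤ Real.exp Z * (Z.factorial:ℝ) := by
        apply mul_le_mul_of_nonneg_right _ (by positivity)
        exact Real.sum_le_exp_of_nonneg (by positivity) (Z+1)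
  rwa [← Real.exp_one_pow] at h1

end GMWAux

/-- Upper-bound half of the summation lemma (Greenhill–McKay–Wang, Cor. 4.5). -/
theorem stmt_17 (Z : ℕ) (hZ : 2 ≤ Z) (A B : ℕ → ℝ)
    (hA : ∀ i ∈ Finset.Icc 1 Z, 0 ≤ A i)
    (hB : ∀ i ∈ Finset.Icc 1 Z, 0 ≤ 1 - ((i : ℝ) - 1) * B i)
    (nn : ℕ → ℝ) (hn0 : nn 0 = 1)
    (hrec : ∀ i ∈ Finset.Icc 1 Z,
      nn i = nn (i - 1) * ((1 / (i : ℝ)) * A i * (1 - ((i : ℝ) - 1) * B i)))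
    (A1 A2 C1 C2 : ℝ)
    (hA1 : IsLeast ((fun i => A i) '' (Finset.Icc 1 Z : Finset ℕ)) A1)
    (hA2 : IsGreatest ((fun i => A i) '' (Finset.Icc 1 Z : Finset ℕ)) A2)
    (hC1 : IsLeast ((fun i => A i * B i) '' (Finset.Icc 1 Z : Finset ℕ)) C1)
    (hC2 : IsGreatest ((fun i => A i * B i) '' (Finset.Icc 1 Z : Finset ℕ)) C2)
    (c : ℝ) (hc0 : 0 < c) (hc3 : c < 1 / 3)
    (hbound : ∀ x ∈ Set.Icc A1 A2, x / Z ≤ c)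
    (hbound' : ∀ x ∈ Set.Icc C1 C2, |x| ≤ c) :
    ∑ i ∈ Finset.range (Z + 1), nn i ≤
      Real.exp (A2 - A2 * C1 / 2 + A2 * C1 ^ 2 / 2) +
        (2 * Real.exp 1 * c) ^ Z := by
  have hZ0 : (0:ℝ) < Z := by exact_mod_cast Nat.lt_of_lt_of_le Nat.zero_lt_two hZ
  set r : ℕ → ℝ := fun i => (∏ j ∈ range i, (A2 - (j:ℝ) * C1)) / (i.factorial : ℝ) with hrdef
  -- basic facts
  have hA2_0 : 0 ≤ A2 := by
    obtain ⟨k, hk, hke⟩ := hA2.1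
    exact hke ▸ hA k (Finset.mem_coe.1 hk)
  have hC1C2 : C1 ≤ C2 := hC2.2 hC1.1
  have habsC1 : |C1| ≤ c := hbound' C1 ⟨le_refl C1, hC1C2⟩
  have hA1leA2 : A1 ≤ A2 := hA2.2 hA1.1
  have hA2cZ : A2 ≤ c * Z := by
    have := hbound A2 ⟨hA1leA2, le_refl _⟩
    rwa [div_le_iff₀ hZ0] at this
  have hfac : ∀ i ∈ Finset.Icc 1 Z, 0 ≤ A i * (1 - ((i:ℝ)-1) * B i) ∧
      A i * (1 - ((i:ℝ)-1) * B i) ≤ A2 - ((i:ℝ)-1) * C1 := by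
    intro i hi
    have h1 : 1 ≤ i := (Finset.mem_Icc.1 hi).1
    have hi1 : (1:ℝ) ≤ (i:ℝ) := by exact_mod_cast h1
    have hAi := hA i hi
    have hBi := hB i hi
    have hAle : A i ≤ A2 := hA2.2 (Set.mem_image_of_mem _ (Finset.mem_coe.2 hi))
    have hCle : C1 ≤ A i * B i := hC1.2 (Set.mem_image_of_mem _ (Finset.mem_coe.2 hi))
    have ht : (0:ℝ) ≤ (i:ℝ) - 1 := by linarith
    refine ⟨mul_nonneg hAi hBi, ?_⟩
    have h2 := mul_le_mul_of_nonneg_left hCle ht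
    nlinarith
  have hkey : ∀ j : ℕ, j < Z → (0:ℝ) ≤ A2 - (j:ℝ) * C1 := by
    intro j hj
    have hmem : j+1 ∈ Finset.Icc 1 Z := by rw [Finset.mem_Icc]; omega
    have hcast : ((j+1:ℕ):ℝ) - 1 = (j:ℝ) := by push_cast; ring
    have hf := hfac (j+1) hmem
    rw [hcast] at hf
    linarith [hf.1, hf.2]
  have hr0 : ∀ i, i ≤ Z → 0 ≤ r i := by
    intro i hi
    have hp : 0 ≤ ∏ j ∈ range i, (A2 - (j:ℝ) * C1) :=
      Finset.prod_nonneg fun j hj => hkey j (lt_of_lt_of_le (Finset.mem_range.1 hj) hi)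
    have hf : (0:ℝ) < (i.factorial : ℝ) := by positivity
    simp only [hrdef]
    positivity
  have hnn : ∀ i, i ≤ Z → 0 ≤ nn i ∧ nn i ≤ r i := by
    intro i
    induction i with
    | zero =>
      intro _
      constructor
      · rw [hn0]; norm_num
      · rw [hn0]; simp [hrdef]
    | succ i ih =>
      intro h
      have hi : i ≤ Z := le_trans (Nat.le_succ i) h
      obtain ⟨h0, h1⟩ := ih hi
      have hmem : i+1 ∈ Finset.Icc 1 Z := by rw [Finset.mem_Icc]; omega
      have hcast : ((i+1:ℕ):ℝ) - 1 = (i:ℝ) := by push_cast; ring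
      have hrec' := hrec (i+1) hmem
      rw [Nat.add_sub_cancel, hcast] at hrec'
      have hf := hfac (i+1) hmem
      rw [hcast] at hf
      have hq0 : 0 ≤ (1 / ((i+1:ℕ):ℝ)) * A (i+1) * (1 - (i:ℝ) * B (i+1)) := by
        apply mul_nonneg (mul_nonneg (by positivity) (hA _ hmem))
        have := hB _ hmem
        rw [hcast] at this
        exact this
      have hq1 : (1 / ((i+1:ℕ):ℝ)) * A (i+1) * (1 - (i:ℝ) * B (i+1)) ≤
          (A2 - (i:ℝ) * C1) / ((i+1:ℕ):ℝ) := by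
        rw [div_eq_mul_one_div (A2 - (i:ℝ)*C1), mul_comm (A2 - (i:ℝ)*C1)]
        rw [mul_assoc]
        apply mul_le_mul_of_nonneg_left _ (by positivity)
        exact hf.2
      constructor
      · rw [hrec']
        exact mul_nonneg h0 hq0
      · rw [hrec']
        have hstep : nn i * ((1 / ((i+1:ℕ):ℝ)) * A (i+1) * (1 - (i:ℝ) * B (i+1))) ≤
            r i * ((A2 - (i:ℝ) * C1) / ((i+1:ℕ):ℝ)) := by
          apply mul_le_mul h1 hq1 hq0 (hr0 i hi)
        have hre : r (i+1) = r i * ((A2 - (i:ℝ) * C1) / ((i+1:ℕ):ℝ)) := by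
          simp only [hrdef]
          rw [Finset.prod_range_succ, Nat.factorial_succ, div_mul_div_comm]
          push_cast
          rw [mul_comm ((i:ℝ) + 1) (i.factorial : ℝ)]
        rw [hre]
        exact hstep
  have hsum : ∑ i ∈ Finset.range (Z+1), nn i ≤ ∑ i ∈ Finset.range (Z+1), r i := by
    apply Finset.sum_le_sum
    intro i hi
    exact (hnn i (Nat.lt_succ_iff.1 (Finset.mem_range.1 hi))).2
  refine le_trans hsum ?_
  rcases lt_trichotomy C1 0 with hneg | hzero | hpos
  · -- C1 < 0
    set d : ℝ := -C1 with hddef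
    have hC1d : C1 = -d := by rw [hddef]; ring
    have hd0 : 0 < d := by rw [hddef]; linarith
    have hdc : d ≤ c := by
      have := (abs_le.1 habsC1).1
      rw [hddef]; linarith
    have hd3 : d < 1/3 := lt_of_le_of_lt hdc hc3
    have hdne : d ≠ 0 := ne_of_gt hd0
    have hβ0 : 0 ≤ A2 / d := div_nonneg hA2_0 hd0.le
    have hterm : ∀ i : ℕ, r i = (∏ j ∈ range i, (A2/d + (j:ℝ))) * d^i / (i.factorial:ℝ) := by
      intro i
      simp only [hrdef]
      rw [show (∏ j ∈ range i, (A2 - (j:ℝ)*C1)) = ∏ j ∈ range i, ((A2/d + (j:ℝ)) * d) from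
        Finset.prod_congr rfl fun j _ => by rw [hC1d]; field_simp; all_goals ring]
      rw [Finset.prod_mul_distrib, Finset.prod_const, Finset.card_range]
    have hlem := lemB Z (A2/d) d hβ0 hd0.le (by linarith)
    have hsum2 : ∑ i ∈ range (Z+1), r i ≤ (1-d)^(-(A2/d)) := by
      rw [Finset.sum_congr rfl fun i _ => hterm i]
      exact hlem
    have hexp : (1-d)^(-(A2/d)) ≤ Real.exp (A2 - A2*C1/2 + A2*C1^2/2) := by
      rw [Real.rpow_def_of_pos (by linarith)]
      apply Real.exp_le_exp.2
      have hlog := logB hd0.le (le_of_lt hd3)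
      have h2 : Real.log (1-d) * (-(A2/d)) ≤ (-(d + d^2/2 + d^3/2)) * (-(A2/d)) :=
        mul_le_mul_of_nonpos_right hlog (by linarith)
      have h3 : (-(d + d^2/2 + d^3/2)) * (-(A2/d)) = A2 - A2*C1/2 + A2*C1^2/2 := by
        rw [hC1d]; field_simp; ring
      linarith
    have hpos' : (0:ℝ) ≤ (2 * Real.exp 1 * c)^Z := by positivity
    linarith
  · -- C1 = 0
    subst hzero
    have hterm : ∀ i : ℕ, r i = A2^i / (i.factorial:ℝ) := by
      intro i; simp [hrdef]
    rw [Finset.sum_congr rfl fun i _ => hterm i]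
    have h1 := Real.sum_le_exp_of_nonneg hA2_0 (Z+1)
    have hpos' : (0:ℝ) ≤ (2 * Real.exp 1 * c)^Z := by positivity
    have heq : A2 - A2 * 0 / 2 + A2 * 0^2 / 2 = A2 := by ring
    rw [heq]
    linarith
  · -- C1 > 0
    have hC1c : C1 ≤ c := le_trans (le_abs_self C1) habsC1
    have hαZ : ((Z-1:ℕ):ℝ) ≤ A2 / C1 := by
      have hk := hkey (Z-1) (by omega)
      rw [le_div_iff₀ hpos]
      linarith
    have hterm : ∀ i : ℕ, r i = (∏ j ∈ range i, (A2/C1 - (j:ℝ))) * C1^i / (i.factorial:ℝ) := by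
      intro i
      simp only [hrdef]
      rw [show (∏ j ∈ range i, (A2 - (j:ℝ)*C1)) = ∏ j ∈ range i, ((A2/C1 - (j:ℝ)) * C1) from
        Finset.prod_congr rfl fun j _ => by field_simp; all_goals ring]
      rw [Finset.prod_mul_distrib, Finset.prod_const, Finset.card_range]
    have hZeq : Z - 1 + 1 = Z := by omega
    have hlem := lemA (Z-1) (A2/C1) C1 hαZ hpos.le
    rw [hZeq] at hlem
    have h1 : ∑ i ∈ range Z, r i ≤ (1+C1)^(A2/C1) := by
      rw [Finset.sum_congr rfl fun i _ => hterm i]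
      exact hlem
    have h2 : (1+C1)^(A2/C1) ≤ Real.exp (A2 - A2*C1/2 + A2*C1^2/2) := by
      rw [Real.rpow_def_of_pos (by linarith)]
      apply Real.exp_le_exp.2
      have hlog := logA hpos.le (by linarith)
      have hα0 : 0 ≤ A2/C1 := div_nonneg hA2_0 hpos.le
      have hmul := mul_le_mul_of_nonneg_right hlog hα0
      have heq : (C1 - C1^2/2 + C1^3/2) * (A2/C1) = A2 - A2*C1/2 + A2*C1^2/2 := by
        field_simp
      linarith
    have h3 : r Z ≤ (2 * Real.exp 1 * c)^Z := by
      have hb1 : ∏ j ∈ range Z, (A2 - (j:ℝ)*C1) ≤ A2^Z := by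
        have hp : ∏ j ∈ range Z, (A2 - (j:ℝ)*C1) ≤ ∏ _j ∈ range Z, A2 :=
          Finset.prod_le_prod
            (fun j hj => hkey j (Finset.mem_range.1 hj))
            (fun j hj => by nlinarith [Nat.cast_nonneg (α := ℝ) j])
        simpa using hp
      have hfZ : (0:ℝ) < (Z.factorial : ℝ) := by positivity
      calc r Z ≤ A2^Z / (Z.factorial:ℝ) := by
            simp only [hrdef]
            gcongr
        _ ≤ (c*(Z:ℝ))^Z / (Z.factorial:ℝ) := by
            gcongr
        _ = c^Z * ((Z:ℝ)^Z / (Z.factorial:ℝ)) := by rw [mul_pow]; ring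
        _ ≤ c^Z * Real.exp 1 ^ Z :=
            mul_le_mul_of_nonneg_left (pow_div_fact_le Z) (by positivity)
        _ = (Real.exp 1 * c)^Z := by rw [mul_pow]; ring
        _ ≤ (2 * Real.exp 1 * c)^Z := by
            apply pow_le_pow_left₀ (by positivity)
            nlinarith [Real.exp_pos 1]
    rw [Finset.sum_range_succ]
    linarith
end

section
/- Let $Z \ge 2$ be an integer, and let real sequences $A(i) \ge 0$ and $B(i)$ with $1-(i-1)B(i) \ge 0$ for $1 \le i \le Z$ be given. Define $n_0 = 1$ and $n_i = n_{i-1}\cdot\frac{1}{i}A(i)(1-(i-1)B(i))$. Set $A_1 = \min_i A(i)$, $C_2 = \max_i A(i)B(i)$, and suppose $0 < \hat c < 1/3$ satisfies $\max\{A/Z,|C|\} \le \hat c$ for all $A \in [A_1, \max_i A(i)]$ and $C \in [\min_i A(i)B(i), C_2]$. Then $\sum_{i=0}^Z n_i \ge \exp\left(A_1 - \tfrac12 A_1 C_2\right) - (2e\hat c)^Z$. -/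
open Finset

lemma gmw_log_aux : MonotoneOn (fun x : ℝ => Real.log (1 + x) - x + x ^ 2 / 2) (Set.Ioi (-1)) := by
  have hderiv : ∀ x ∈ Set.Ioi (-1 : ℝ),
      HasDerivAt (fun x : ℝ => Real.log (1 + x) - x + x ^ 2 / 2)
        (1 / (1 + x) - 1 + x) x := by
    intro x hx
    have hx1 : (0:ℝ) < 1 + x := by have := hx.out; linarith
    have h1 : HasDerivAt (fun x : ℝ => 1 + x) 1 x := by
      simpa using (hasDerivAt_id x).const_add 1
    have h2 : HasDerivAt (fun x : ℝ => Real.log (1 + x)) (1 / (1 + x)) x := by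
      simpa using h1.log hx1.ne'
    have h3 : HasDerivAt (fun x : ℝ => x ^ 2 / 2) x x := by
      simpa using (hasDerivAt_pow 2 x).div_const 2
    exact (h2.sub (hasDerivAt_id x)).add h3
  apply monotoneOn_of_deriv_nonneg (convex_Ioi _)
  · exact continuousOn_of_forall_continuousAt (fun x hx => (hderiv x hx).continuousAt)
  · intro x hx
    rw [interior_Ioi] at hx
    exact (hderiv x hx).differentiableAt.differentiableWithinAt
  · intro x hx
    rw [interior_Ioi] at hx
    rw [(hderiv x hx).deriv]
    have hx1 : (0:ℝ) < 1 + x := by have := hx.out; linarith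
    have key : 1 / (1 + x) - 1 + x = x ^ 2 / (1 + x) := by
      field_simp; ring
    rw [key]
    positivity

lemma gmw_log_ge {x : ℝ} (hx : 0 ≤ x) : x - x ^ 2 / 2 ≤ Real.log (1 + x) := by
  have h := gmw_log_aux (by norm_num : (0:ℝ) ∈ Set.Ioi (-1))
    (by simp only [Set.mem_Ioi]; linarith : x ∈ Set.Ioi (-1)) hx
  simp only [add_zero, Real.log_one] at h
  nlinarith [h]

lemma gmw_log_le {x : ℝ} (hx1 : -1 < x) (hx : x ≤ 0) : Real.log (1 + x) ≤ x - x ^ 2 / 2 := by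
  have h := gmw_log_aux (Set.mem_Ioi.2 hx1) (by norm_num : (0:ℝ) ∈ Set.Ioi (-1)) hx
  simp only [add_zero, Real.log_one] at h
  nlinarith [h]

lemma gmw_pos {C : ℝ} (hC : |C| < 1) {t : ℝ} (ht : t ∈ Set.Icc (0:ℝ) 1) : 0 < 1 + C * t := by
  rcases ht with ⟨ht0, ht1⟩
  rcases abs_lt.mp hC with ⟨h1, h2⟩
  nlinarith

lemma gmw_iter (C p : ℝ) (hC : |C| < 1) (n : ℕ) :
    ∀ t ∈ Set.Icc (0:ℝ) 1,
      iteratedDerivWithin n (fun t => (1 + C * t) ^ p) (Set.Icc 0 1) t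
        = (∏ j ∈ range n, (p - j)) * C ^ n * (1 + C * t) ^ (p - n) := by
  induction n with
  | zero => intro t ht; simp
  | succ n ih =>
    intro t ht
    have hUD : UniqueDiffOn ℝ (Set.Icc (0:ℝ) 1) := uniqueDiffOn_Icc one_pos
    rw [iteratedDerivWithin_succ]
    have hcongr : Set.EqOn (iteratedDerivWithin n (fun t => (1 + C * t) ^ p) (Set.Icc 0 1))
        (fun t => (∏ j ∈ range n, (p - j)) * C ^ n * (1 + C * t) ^ (p - n)) (Set.Icc 0 1) :=
      fun x hx => ih x hx
    rw [derivWithin_congr hcongr (hcongr ht)]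
    have hpos := gmw_pos hC ht
    have h1 : HasDerivAt (fun t : ℝ => 1 + C * t) C t := by
      simpa using ((hasDerivAt_id t).const_mul C).const_add 1
    have h2 : HasDerivAt (fun t : ℝ => (1 + C * t) ^ (p - n))
        ((p - n) * (1 + C * t) ^ (p - n - 1) * C) t := by
      have := h1.rpow_const (p := p - n) (Or.inl hpos.ne')
      simpa [mul_comm, mul_assoc, mul_left_comm] using this
    have h3 := ((h2.const_mul ((∏ j ∈ range n, (p - j)) * C ^ n)).hasDerivWithinAt).derivWithin
      (hUD t ht)
    rw [h3, prod_range_succ]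
    have : ((n : ℝ) + 1) = ((n + 1 : ℕ) : ℝ) := by push_cast; ring
    rw [show p - (n : ℝ) - 1 = p - ((n + 1 : ℕ) : ℝ) by push_cast; ring]
    ring

lemma gmw_taylor (C p : ℝ) (hC : |C| < 1) (N : ℕ) :
    ∃ ξ ∈ Set.Ioo (0:ℝ) 1,
      (1 + C) ^ p - ∑ i ∈ range (N + 1), (∏ j ∈ range i, (p - j)) * C ^ i / i.factorial
        = (∏ j ∈ range (N + 1), (p - j)) * C ^ (N + 1) * (1 + C * ξ) ^ (p - (N + 1))
            / (N + 1).factorial := by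
  have hUD : UniqueDiffOn ℝ (Set.Icc (0:ℝ) 1) := uniqueDiffOn_Icc one_pos
  set g : ℝ → ℝ := fun t => (1 + C * t) ^ p with hg
  have hcd : ContDiffOn ℝ N g (Set.Icc (0:ℝ) 1) := by
    intro t ht
    have hpos := gmw_pos hC ht
    have h1 : ContDiffAt ℝ N (fun t : ℝ => 1 + C * t) t :=
      (contDiff_const.add (contDiff_const.mul contDiff_id)).contDiffAt
    exact ((Real.contDiffAt_rpow_const_of_ne hpos.ne').comp t h1).contDiffWithinAt
  have hdiff : DifferentiableOn ℝ
      (iteratedDerivWithin N g (Set.Icc 0 1)) (Set.Ioo (0:ℝ) 1) := by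
    apply DifferentiableOn.congr (f := fun t =>
        (∏ j ∈ range N, (p - j)) * C ^ N * (1 + C * t) ^ (p - N))
    · intro t ht
      have hpos := gmw_pos hC (Set.Ioo_subset_Icc_self ht)
      have h1 : HasDerivAt (fun t : ℝ => 1 + C * t) C t := by
        simpa using ((hasDerivAt_id t).const_mul C).const_add 1
      exact (((h1.rpow_const (Or.inl hpos.ne')).const_mul
        _).differentiableAt).differentiableWithinAt
    · intro t ht
      exact gmw_iter C p hC N t (Set.Ioo_subset_Icc_self ht)
  have hTay := taylor_mean_remainder_lagrange (f := g) (x₀ := 0) (x := 1) (n := N)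
    zero_ne_one (by rw [Set.uIcc_of_le zero_le_one]; exact hcd)
    (by rw [Set.uIcc_of_le zero_le_one, Set.uIoo_of_le zero_le_one]; exact hdiff)
  rw [Set.uIcc_of_le zero_le_one, Set.uIoo_of_le zero_le_one] at hTay
  obtain ⟨ξ, hξ, hEq⟩ := hTay
  refine ⟨ξ, hξ, ?_⟩
  have hT : taylorWithinEval g N (Set.Icc 0 1) 0 1
      = ∑ i ∈ range (N + 1), (∏ j ∈ range i, (p - j)) * C ^ i / i.factorial := by
    rw [taylor_within_apply]
    apply Finset.sum_congr rfl
    intro k hk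
    rw [gmw_iter C p hC k 0 (by norm_num)]
    simp [Real.one_rpow]
    ring
  have hg1 : g 1 = (1 + C) ^ p := by simp [hg]
  rw [hT, hg1] at hEq
  rw [hEq, gmw_iter C p hC (N + 1) ξ (Set.Ioo_subset_Icc_self hξ)]
  push_cast
  ring

lemma gmw_iter_exp (a : ℝ) (n : ℕ) :
    ∀ t ∈ Set.Icc (0:ℝ) 1,
      iteratedDerivWithin n (fun t => Real.exp (a * t)) (Set.Icc 0 1) t
        = a ^ n * Real.exp (a * t) := by
  induction n with
  | zero => intro t ht; simp
  | succ n ih =>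
    intro t ht
    have hUD : UniqueDiffOn ℝ (Set.Icc (0:ℝ) 1) := uniqueDiffOn_Icc one_pos
    rw [iteratedDerivWithin_succ]
    have hcongr : Set.EqOn (iteratedDerivWithin n (fun t => Real.exp (a * t)) (Set.Icc 0 1))
        (fun t => a ^ n * Real.exp (a * t)) (Set.Icc 0 1) := fun x hx => ih x hx
    rw [derivWithin_congr hcongr (hcongr ht)]
    have h1 : HasDerivAt (fun t : ℝ => a * t) a t := by
      simpa using (hasDerivAt_id t).const_mul a
    have h2 : HasDerivAt (fun t : ℝ => Real.exp (a * t)) (Real.exp (a * t) * a) t := h1.exp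
    rw [((h2.const_mul (a ^ n)).hasDerivWithinAt).derivWithin (hUD t ht)]
    ring

lemma gmw_taylor_exp (a : ℝ) (N : ℕ) :
    ∃ ξ ∈ Set.Ioo (0:ℝ) 1,
      Real.exp a - ∑ i ∈ range (N + 1), a ^ i / i.factorial
        = a ^ (N + 1) * Real.exp (a * ξ) / (N + 1).factorial := by
  have hcd : ContDiffOn ℝ N (fun t => Real.exp (a * t)) (Set.Icc (0:ℝ) 1) :=
    (Real.contDiff_exp.comp (contDiff_const.mul contDiff_id)).contDiffOn
  have hdiff : DifferentiableOn ℝ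
      (iteratedDerivWithin N (fun t => Real.exp (a * t)) (Set.Icc 0 1)) (Set.Ioo (0:ℝ) 1) := by
    apply DifferentiableOn.congr (f := fun t => a ^ N * Real.exp (a * t))
    · intro t ht
      have h1 : HasDerivAt (fun t : ℝ => a * t) a t := by
        simpa using (hasDerivAt_id t).const_mul a
      exact ((h1.exp.const_mul (a ^ N)).differentiableAt).differentiableWithinAt
    · intro t ht; exact gmw_iter_exp a N t (Set.Ioo_subset_Icc_self ht)
  have hTay := taylor_mean_remainder_lagrange (f := fun t => Real.exp (a * t))
    (x₀ := 0) (x := 1) (n := N) zero_ne_one (by rw [Set.uIcc_of_le zero_le_one]; exact hcd)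
    (by rw [Set.uIcc_of_le zero_le_one, Set.uIoo_of_le zero_le_one]; exact hdiff)
  rw [Set.uIcc_of_le zero_le_one, Set.uIoo_of_le zero_le_one] at hTay
  obtain ⟨ξ, hξ, hEq⟩ := hTay
  refine ⟨ξ, hξ, ?_⟩
  have hT : taylorWithinEval (fun t => Real.exp (a * t)) N (Set.Icc 0 1) 0 1
      = ∑ i ∈ range (N + 1), a ^ i / i.factorial := by
    rw [taylor_within_apply]
    apply Finset.sum_congr rfl
    intro k hk
    rw [gmw_iter_exp a k 0 (by norm_num)]
    simp
    ring
  rw [hT] at hEq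
  simp only [mul_one] at hEq
  rw [hEq, gmw_iter_exp a (N + 1) ξ (Set.Ioo_subset_Icc_self hξ)]
  ring

lemma gmw_choose_le_two_pow (n k : ℕ) : n.choose k ≤ 2 ^ n := by
  rcases le_or_gt k n with h | h
  · calc n.choose k ≤ ∑ m ∈ range (n + 1), n.choose m :=
        Finset.single_le_sum (fun i _ => Nat.zero_le _) (mem_range.2 (Nat.lt_succ_of_le h))
    _ = 2 ^ n := Nat.sum_range_choose n
  · rw [Nat.choose_eq_zero_of_lt h]; exact Nat.zero_le _

lemma gmw_term_bound (Z : ℕ) (hZ : 1 ≤ Z) (a C c : ℝ) (ha0 : 0 ≤ a) (haZ : a ≤ c * Z)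
    (hCc : |C| ≤ c) (hc0 : 0 ≤ c) (i : ℕ) :
    |(∏ j ∈ range i, (a - j * C)) / i.factorial| ≤ 2 ^ (Z - 1) * (2 * c) ^ i := by
  have h1 : |∏ j ∈ range i, (a - j * C)| ≤ ∏ j ∈ range i, (c * (Z + j)) := by
    rw [abs_prod]
    apply Finset.prod_le_prod (fun j _ => abs_nonneg _)
    intro j _
    calc |a - j * C| ≤ |a| + |(j : ℝ) * C| := abs_sub _ _
      _ = a + j * |C| := by rw [abs_of_nonneg ha0, abs_mul, Nat.abs_cast]
      _ ≤ c * Z + j * c := by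
          have hj : (0:ℝ) ≤ (j:ℝ) := Nat.cast_nonneg j
          have := mul_le_mul_of_nonneg_left hCc hj
          linarith
      _ = c * (Z + j) := by ring
  have hasc : ∀ m : ℕ, (∏ j ∈ range m, ((Z : ℝ) + j)) = (Z.ascFactorial m : ℝ) := by
    intro m
    induction m with
    | zero => simp
    | succ n ih =>
      rw [prod_range_succ, ih, Nat.ascFactorial_succ]
      push_cast; ring
  have h2 : (∏ j ∈ range i, (c * ((Z : ℝ) + j))) = c ^ i * (Z.ascFactorial i : ℝ) := by
    rw [Finset.prod_mul_distrib, Finset.prod_const, Finset.card_range, hasc]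
  have h3 : (Z.ascFactorial i : ℝ) ≤ (i.factorial : ℝ) * 2 ^ (Z - 1) * 2 ^ i := by
    have := Nat.ascFactorial_eq_factorial_mul_choose' Z i
    rw [this]
    push_cast
    have hch : ((Z + i - 1).choose i : ℝ) ≤ 2 ^ (Z - 1) * 2 ^ i := by
      have h4 : (Z + i - 1).choose i ≤ 2 ^ (Z + i - 1) := gmw_choose_le_two_pow _ _
      have h5 : Z + i - 1 = (Z - 1) + i := by omega
      calc ((Z + i - 1).choose i : ℝ) ≤ (2 : ℝ) ^ (Z + i - 1) := by exact_mod_cast h4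
        _ = 2 ^ (Z - 1) * 2 ^ i := by rw [h5, pow_add]
    calc (i.factorial : ℝ) * (Z + i - 1).choose i
        ≤ (i.factorial : ℝ) * (2 ^ (Z - 1) * 2 ^ i) := by
          apply mul_le_mul_of_nonneg_left hch (by positivity)
      _ = (i.factorial : ℝ) * 2 ^ (Z - 1) * 2 ^ i := by ring
  have hfac : (0:ℝ) < i.factorial := by exact_mod_cast i.factorial_pos
  rw [abs_div, abs_of_pos hfac, div_le_iff₀ hfac]
  calc |∏ j ∈ range i, (a - j * C)| ≤ ∏ j ∈ range i, (c * (Z + j)) := h1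
    _ = c ^ i * (Z.ascFactorial i : ℝ) := h2
    _ ≤ c ^ i * ((i.factorial : ℝ) * 2 ^ (Z - 1) * 2 ^ i) := by
        apply mul_le_mul_of_nonneg_left h3 (by positivity)
    _ = 2 ^ (Z - 1) * (2 * c) ^ i * i.factorial := by rw [mul_pow]; ring

lemma gmw_geom_tail (Z N : ℕ) (hZ : 1 ≤ Z) (c : ℝ) (hc0 : 0 < c) (hc3 : c < 1 / 3) :
    ∑ i ∈ Finset.Ico (Z + 1) N, (2:ℝ) ^ (Z - 1) * (2 * c) ^ i
      ≤ (2 * Real.exp 1 * c) ^ Z := by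
  have h2c : (2:ℝ) * c < 1 := by linarith
  have h2c0 : (0:ℝ) ≤ 2 * c := by linarith
  have hgeom : ∑ i ∈ Finset.Ico (Z + 1) N, (2 * c) ^ i
      ≤ (2 * c) ^ (Z + 1) * 3 := by
    rcases le_or_gt N (Z + 1) with h | h
    · rw [Finset.Ico_eq_empty (by omega)]
      simp; positivity
    · rw [Finset.sum_Ico_eq_sum_range]
      have : ∑ i ∈ range (N - (Z + 1)), (2 * c) ^ (Z + 1 + i)
          = (2 * c) ^ (Z + 1) * ∑ i ∈ range (N - (Z + 1)), (2 * c) ^ i := by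
        rw [Finset.mul_sum]; apply Finset.sum_congr rfl; intro i _; rw [pow_add]
      rw [this]
      apply mul_le_mul_of_nonneg_left _ (by positivity)
      have hsum : ∑ i ∈ range (N - (Z + 1)), (2 * c) ^ i ≤ (1 - 2 * c)⁻¹ := by
        have hm := geom_sum_mul (2 * c) (N - (Z + 1))
        have hpow : (0:ℝ) ≤ (2 * c) ^ (N - (Z + 1)) := by positivity
        have h13 : (0:ℝ) < 1 - 2 * c := by linarith
        have key : (1 - 2*c)⁻¹ - ∑ i ∈ range (N - (Z + 1)), (2 * c) ^ i
            = ((2 * c) ^ (N - (Z + 1))) / (1 - 2*c) := by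
          field_simp
          nlinarith [hm]
        have := div_nonneg hpow h13.le
        linarith [key ▸ this]
      have : (1 - 2 * c)⁻¹ ≤ 3 := by
        rw [inv_le_comm₀ (by linarith) (by norm_num)]
        linarith
      linarith
  calc ∑ i ∈ Finset.Ico (Z + 1) N, (2:ℝ) ^ (Z - 1) * (2 * c) ^ i
      = 2 ^ (Z - 1) * ∑ i ∈ Finset.Ico (Z + 1) N, (2 * c) ^ i := by rw [Finset.mul_sum]
    _ ≤ 2 ^ (Z - 1) * ((2 * c) ^ (Z + 1) * 3) := by
        apply mul_le_mul_of_nonneg_left hgeom (by positivity)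
    _ = 3 * c * ((2:ℝ) ^ (Z - 1) * 2 ^ (Z + 1) * c ^ Z) := by
        rw [mul_pow]; ring
    _ = 3 * c * (4 ^ Z * c ^ Z) := by
        congr 2
        rw [← pow_add]
        have : Z - 1 + (Z + 1) = 2 * Z := by omega
        rw [this, pow_mul]; norm_num
    _ ≤ 1 * ((2 * Real.exp 1) ^ Z * c ^ Z) := by
        apply mul_le_mul (by linarith) _ (by positivity) (by norm_num)
        apply mul_le_mul_of_nonneg_right _ (by positivity)
        apply pow_le_pow_left₀ (by norm_num)
        have := Real.exp_one_gt_d9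
        linarith
    _ = (2 * Real.exp 1 * c) ^ Z := by rw [mul_pow]; ring

lemma gmw_limit (Z : ℕ) (hZ : 1 ≤ Z) (c : ℝ) (hc0 : 0 < c) (hc3 : c < 1 / 3)
    (t : ℕ → ℝ) (htb : ∀ i, |t i| ≤ 2 ^ (Z - 1) * (2 * c) ^ i)
    (T0 D q : ℝ) (hq0 : 0 ≤ q) (hq1 : q < 1) (N₀ : ℕ)
    (hT : ∀ N, N₀ ≤ N → |T0 - ∑ i ∈ range (N + 1), t i| ≤ D * q ^ (N + 1)) :
    T0 - (2 * Real.exp 1 * c) ^ Z ≤ ∑ i ∈ range (Z + 1), t i := by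
  have key : ∀ N, max N₀ Z ≤ N →
      T0 - D * q ^ (N + 1) - (2 * Real.exp 1 * c) ^ Z ≤ ∑ i ∈ range (Z + 1), t i := by
    intro N hN
    have hZN : Z + 1 ≤ N + 1 := by
      have := le_trans (le_max_right N₀ Z) hN; omega
    have hsplit := Finset.sum_range_add_sum_Ico t hZN
    have htail : ∑ i ∈ Finset.Ico (Z + 1) (N + 1), t i ≤ (2 * Real.exp 1 * c) ^ Z := by
      calc ∑ i ∈ Finset.Ico (Z + 1) (N + 1), t i
          ≤ ∑ i ∈ Finset.Ico (Z + 1) (N + 1), (2:ℝ) ^ (Z - 1) * (2 * c) ^ i := by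
            apply Finset.sum_le_sum
            intro i _
            exact le_trans (le_abs_self _) (htb i)
        _ ≤ (2 * Real.exp 1 * c) ^ Z := gmw_geom_tail Z (N + 1) hZ c hc0 hc3
    have h2 := abs_le.mp (hT N (le_trans (le_max_left N₀ Z) hN))
    linarith [h2.1, h2.2]
  have htend : Filter.Tendsto
      (fun N : ℕ => T0 - D * q ^ (N + 1) - (2 * Real.exp 1 * c) ^ Z) Filter.atTop
      (nhds (T0 - D * 0 - (2 * Real.exp 1 * c) ^ Z)) := by
    apply Filter.Tendsto.sub_const
    apply Filter.Tendsto.const_sub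
    apply Filter.Tendsto.const_mul
    exact (tendsto_pow_atTop_nhds_zero_of_lt_one hq0 hq1).comp (Filter.tendsto_add_atTop_nat 1)
  have := le_of_tendsto htend (Filter.eventually_atTop.2 ⟨max N₀ Z, key⟩)
  simpa using this

lemma gmw_key (Z M : ℕ) (hZ : 2 ≤ Z) (a C c : ℝ) (ha0 : 0 ≤ a) (haZ : a ≤ c * Z)
    (hCc : |C| ≤ c) (hc0 : 0 < c) (hc3 : c < 1 / 3)
    (hMZ : M ≤ Z)
    (hpos : ∀ j : ℕ, j < M → 0 ≤ a - j * C)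
    (hMfull : M = Z ∨ a - M * C < 0) :
    Real.exp (a - a * C / 2) - (2 * Real.exp 1 * c) ^ Z
      ≤ ∑ i ∈ range (M + 1), (∏ j ∈ range i, (a - j * C)) / i.factorial := by
  have hZ1 : 1 ≤ Z := by omega
  have hC1 : |C| < 1 := lt_of_le_of_lt hCc (by linarith)
  have hC1' := abs_lt.mp hC1
  have h1C : (0:ℝ) < 1 + C := by linarith [hC1'.1]
  have hpows : (0:ℝ) ≤ (2 * Real.exp 1 * c) ^ Z := by positivity
  set t : ℕ → ℝ := fun i => (∏ j ∈ range i, (a - j * C)) / i.factorial with ht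
  have htb : ∀ i, |t i| ≤ 2 ^ (Z - 1) * (2 * c) ^ i :=
    fun i => gmw_term_bound Z hZ1 a C c ha0 haZ hCc hc0.le i
  by_cases hC0 : C = 0
  · -- exponential case
    have hMZ' : M = Z := by
      rcases hMfull with h | h
      · exact h
      · exfalso; rw [hC0] at h; simp at h; linarith
    rw [hMZ'] at *
    clear hMZ'
    have hts : ∀ i, t i = a ^ i / i.factorial := by
      intro i
      simp only [ht, hC0, mul_zero, sub_zero, Finset.prod_const, Finset.card_range]
    have hgoal : Real.exp (a - a * C / 2) = Real.exp a := by rw [hC0]; ring_nf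
    rw [hgoal]
    apply gmw_limit Z hZ1 c hc0 hc3 t htb (Real.exp a) (2 ^ (Z - 1) * Real.exp a) (2 * c)
      (by linarith) (by linarith) 0
    intro N _
    obtain ⟨ξ, hξ, hEq⟩ := gmw_taylor_exp a N
    have hsum : ∑ i ∈ range (N + 1), t i = ∑ i ∈ range (N + 1), a ^ i / i.factorial := by
      apply Finset.sum_congr rfl; intro i _; exact hts i
    rw [hsum, hEq]
    have hexpb : Real.exp (a * ξ) ≤ Real.exp a := by
      apply Real.exp_le_exp.2
      nlinarith [hξ.1, hξ.2, ha0]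
    have habs : |a ^ (N + 1) * Real.exp (a * ξ) / (N + 1).factorial|
        = (a ^ (N + 1) / (N + 1).factorial) * Real.exp (a * ξ) := by
      rw [abs_of_nonneg (by positivity)]; ring
    rw [habs]
    have h1 : a ^ (N + 1) / ((N + 1).factorial : ℝ) ≤ 2 ^ (Z - 1) * (2 * c) ^ (N + 1) := by
      have := htb (N + 1)
      rw [hts (N + 1), abs_of_nonneg (by positivity)] at this
      exact this
    calc (a ^ (N + 1) / ((N + 1).factorial : ℝ)) * Real.exp (a * ξ)
        ≤ (2 ^ (Z - 1) * (2 * c) ^ (N + 1)) * Real.exp a := by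
          apply mul_le_mul h1 hexpb (Real.exp_pos _).le (by positivity)
      _ = 2 ^ (Z - 1) * Real.exp a * (2 * c) ^ (N + 1) := by ring
  · -- rpow case
    set p : ℝ := a / C with hp
    have hconv : ∀ i : ℕ, (∏ j ∈ range i, (p - j)) * C ^ i = ∏ j ∈ range i, (a - j * C) := by
      intro i
      have h1 : ∏ j ∈ range i, (a - j * C) = ∏ j ∈ range i, ((p - j) * C) := by
        apply Finset.prod_congr rfl
        intro j _
        have hCne : C ≠ 0 := hC0
        rw [hp]
        field_simp
      rw [h1, Finset.prod_mul_distrib, Finset.prod_const, Finset.card_range]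
    have hconvt : ∀ N : ℕ, ∑ i ∈ range (N + 1), (∏ j ∈ range i, (p - j)) * C ^ i / i.factorial
        = ∑ i ∈ range (N + 1), t i := by
      intro N
      apply Finset.sum_congr rfl
      intro i _
      rw [hconv i]
    have hexp_le : Real.exp (a - a * C / 2) ≤ (1 + C) ^ p := by
      rw [Real.rpow_def_of_pos h1C, Real.exp_le_exp]
      rcases lt_or_gt_of_ne hC0 with hneg | hposC
      · have hlog := gmw_log_le hC1'.1 hneg.le
        have hpC : p ≤ 0 := div_nonpos_of_nonneg_of_nonpos ha0 hneg.le
        have := mul_le_mul_of_nonpos_right hlog hpC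
        calc a - a * C / 2 = (C - C ^ 2 / 2) * p := by
              have hCne : C ≠ 0 := hC0
              rw [hp]; field_simp
          _ ≤ Real.log (1 + C) * p := by linarith
      · have hlog := gmw_log_ge hposC.le
        have hpC : 0 ≤ p := div_nonneg ha0 hposC.le
        have := mul_le_mul_of_nonneg_right hlog hpC
        calc a - a * C / 2 = (C - C ^ 2 / 2) * p := by
              have hCne : C ≠ 0 := hC0
              rw [hp]; field_simp
          _ ≤ Real.log (1 + C) * p := by linarith
    by_cases hMneg : a - M * C < 0
    · obtain ⟨ξ, hξ, hEq⟩ := gmw_taylor C p hC1 M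
      rw [hconvt M] at hEq
      have hR : (∏ j ∈ range (M + 1), (p - j)) * C ^ (M + 1) * (1 + C * ξ) ^ (p - (M + 1))
          / (M + 1).factorial ≤ 0 := by
        apply div_nonpos_of_nonpos_of_nonneg _ (by positivity)
        apply mul_nonpos_of_nonpos_of_nonneg _
          (Real.rpow_pos_of_pos (gmw_pos hC1 (Set.mem_Icc.2 ⟨hξ.1.le, hξ.2.le⟩)) _).le
        rw [hconv (M + 1), Finset.prod_range_succ]
        exact mul_nonpos_of_nonneg_of_nonpos
          (Finset.prod_nonneg (fun j hj => hpos j (mem_range.mp hj))) hMneg.le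
      have : (1 + C) ^ p ≤ ∑ i ∈ range (M + 1), t i := by linarith
      linarith
    · have hMZ' : M = Z := by tauto
      rw [hMZ'] at *
      clear hMZ'
      apply le_trans (by linarith : Real.exp (a - a * C / 2) - (2 * Real.exp 1 * c) ^ Z
        ≤ (1 + C) ^ p - (2 * Real.exp 1 * c) ^ Z)
      apply gmw_limit Z hZ1 c hc0 hc3 t htb ((1 + C) ^ p)
        (2 ^ (Z - 1) * (2 / 3 : ℝ) ^ p) (3 * c) (by linarith) (by linarith) (Nat.ceil p)
      intro N hN
      obtain ⟨ξ, hξ, hEq⟩ := gmw_taylor C p hC1 N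
      rw [hconvt N] at hEq
      rw [hEq]
      have hbase : (2/3 : ℝ) ≤ 1 + C * ξ := by
        have h1 : |C * ξ| ≤ c := by
          rw [abs_mul]
          calc |C| * |ξ| ≤ c * 1 := by
                apply mul_le_mul hCc _ (abs_nonneg _) (by linarith)
                rw [abs_of_pos hξ.1]; exact hξ.2.le
            _ = c := mul_one c
        have := (abs_le.mp h1).1
        linarith
      have hbase0 : (0:ℝ) < 1 + C * ξ := by linarith
      have hexpo : p - ((N : ℝ) + 1) ≤ 0 := by
        have := Nat.le_ceil p
        have h2 : (Nat.ceil p : ℝ) ≤ (N : ℝ) := by exact_mod_cast hN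
        linarith
      have hrpow : (1 + C * ξ) ^ (p - ((N : ℝ) + 1))
          ≤ (2/3 : ℝ) ^ p * (3 / 2 : ℝ) ^ (N + 1) := by
        have h1 : (1 + C * ξ) ^ (p - ((N : ℝ) + 1)) ≤ (2/3 : ℝ) ^ (p - ((N : ℝ) + 1)) :=
          Real.rpow_le_rpow_of_nonpos (by norm_num) hbase hexpo
        have h2 : (2/3 : ℝ) ^ (p - ((N : ℝ) + 1))
            = (2/3 : ℝ) ^ p * (3/2 : ℝ) ^ (N + 1) := by
          rw [show p - ((N : ℝ) + 1) = p - (((N + 1 : ℕ)) : ℝ) by push_cast; ring]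
          rw [Real.rpow_sub (by norm_num : (0:ℝ) < 2/3), div_eq_mul_inv ((2/3:ℝ) ^ p)]
          congr 1
          rw [Real.rpow_natCast (2/3 : ℝ) (N + 1), ← inv_pow]
          norm_num
        linarith
      have e1 : (∏ j ∈ range (N + 1), (p - j)) * C ^ (N + 1)
            * (1 + C * ξ) ^ (p - ((N : ℝ) + 1)) / (N + 1).factorial
          = ((∏ j ∈ range (N + 1), (a - j * C)) / (N + 1).factorial)
            * (1 + C * ξ) ^ (p - ((N : ℝ) + 1)) := by
        rw [← hconv (N + 1)]; ring
      rw [e1, abs_mul, abs_of_pos (Real.rpow_pos_of_pos hbase0 _)]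
      calc |(∏ j ∈ range (N + 1), (a - j * C)) / ((N + 1).factorial : ℝ)|
            * (1 + C * ξ) ^ (p - ((N : ℝ) + 1))
          ≤ (2 ^ (Z - 1) * (2 * c) ^ (N + 1)) * ((2/3 : ℝ) ^ p * (3 / 2 : ℝ) ^ (N + 1)) := by
            apply mul_le_mul (htb (N + 1)) hrpow (Real.rpow_pos_of_pos hbase0 _).le
              (by positivity)
        _ = 2 ^ (Z - 1) * (2 / 3 : ℝ) ^ p * (3 * c) ^ (N + 1) := by
            rw [show ((3:ℝ) * c) ^ (N + 1) = ((2 * c) * (3/2)) ^ (N + 1) by ring_nf]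
            rw [mul_pow (2 * c) (3/2 : ℝ)]
            ring

/-- Lower-bound half of the summation lemma (Greenhill–McKay–Wang, Cor. 4.5). -/
theorem stmt_18 (Z : ℕ) (hZ : 2 ≤ Z) (A B : ℕ → ℝ)
    (hA : ∀ i ∈ Finset.Icc 1 Z, 0 ≤ A i)
    (hB : ∀ i ∈ Finset.Icc 1 Z, 0 ≤ 1 - ((i : ℝ) - 1) * B i)
    (nn : ℕ → ℝ) (hn0 : nn 0 = 1)
    (hrec : ∀ i ∈ Finset.Icc 1 Z,
      nn i = nn (i - 1) * ((1 / (i : ℝ)) * A i * (1 - ((i : ℝ) - 1) * B i)))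
    (A1 A2 C1 C2 : ℝ)
    (hA1 : IsLeast ((fun i => A i) '' (Finset.Icc 1 Z : Finset ℕ)) A1)
    (hA2 : IsGreatest ((fun i => A i) '' (Finset.Icc 1 Z : Finset ℕ)) A2)
    (hC1 : IsLeast ((fun i => A i * B i) '' (Finset.Icc 1 Z : Finset ℕ)) C1)
    (hC2 : IsGreatest ((fun i => A i * B i) '' (Finset.Icc 1 Z : Finset ℕ)) C2)
    (c : ℝ) (hc0 : 0 < c) (hc3 : c < 1 / 3)
    (hbound : ∀ x ∈ Set.Icc A1 A2, x / Z ≤ c)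
    (hbound' : ∀ x ∈ Set.Icc C1 C2, |x| ≤ c) :
    Real.exp (A1 - A1 * C2 / 2) - (2 * Real.exp 1 * c) ^ Z ≤
      ∑ i ∈ Finset.range (Z + 1), nn i := by
  classical
  -- basic facts
  have ha0 : 0 ≤ A1 := by
    obtain ⟨i₀, hi₀, hAi₀⟩ := hA1.1
    rw [← hAi₀]
    exact hA i₀ (by simpa using hi₀)
  have hA1A2 : A1 ≤ A2 := hA2.2 hA1.1
  have hC1C2 : C1 ≤ C2 := hC2.2 hC1.1
  have hZpos : (0:ℝ) < (Z:ℝ) := by exact_mod_cast (by omega : 0 < Z)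
  have haZ : A1 ≤ c * Z := by
    have := hbound A1 ⟨le_refl A1, hA1A2⟩
    rw [div_le_iff₀ hZpos] at this
    linarith
  have hCc : |C2| ≤ c := hbound' C2 ⟨hC1C2, le_refl C2⟩
  have hA_ge : ∀ i ∈ Finset.Icc 1 Z, A1 ≤ A i := by
    intro i hi
    exact hA1.2 ⟨i, by simpa using hi, rfl⟩
  have hAB_le : ∀ i ∈ Finset.Icc 1 Z, A i * B i ≤ C2 := by
    intro i hi
    exact hC2.2 ⟨i, by simpa using hi, rfl⟩
  -- nonnegativity of nn
  have nn_nonneg : ∀ i, i ≤ Z → 0 ≤ nn i := by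
    intro i
    induction i with
    | zero => intro _; rw [hn0]; norm_num
    | succ n ih =>
      intro h
      have hmem : n + 1 ∈ Finset.Icc 1 Z := Finset.mem_Icc.2 ⟨by omega, h⟩
      have := hrec (n + 1) hmem
      simp only [Nat.add_sub_cancel] at this
      rw [this]
      apply mul_nonneg (ih (by omega))
      apply mul_nonneg (mul_nonneg (by positivity) (hA _ hmem)) (hB _ hmem)
  -- construct M
  obtain ⟨M, hMZ, hpos, hMfull⟩ : ∃ M : ℕ, M ≤ Z ∧ (∀ j : ℕ, j < M → 0 ≤ A1 - j * C2) ∧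
      (M = Z ∨ A1 - M * C2 < 0) := by
    by_cases hex : ∃ j : ℕ, j < Z ∧ A1 - j * C2 < 0
    · obtain ⟨j₀, hj₀Z, hj₀⟩ := hex
      have hex' : ∃ j : ℕ, A1 - j * C2 < 0 := ⟨j₀, hj₀⟩
      refine ⟨Nat.find hex', ?_, ?_, Or.inr (Nat.find_spec hex')⟩
      · exact le_trans (Nat.find_min' hex' hj₀) (by omega)
      · intro k hk
        have := Nat.find_min hex' hk
        linarith [not_lt.mp this]
    · push_neg at hex
      exact ⟨Z, le_refl Z, fun j hj => hex j hj, Or.inl rfl⟩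
  -- t ≤ nn up to M
  have t_le_nn : ∀ i, i ≤ M → (∏ j ∈ range i, (A1 - j * C2)) / i.factorial ≤ nn i := by
    intro i
    induction i with
    | zero => intro _; simp [hn0]
    | succ n ih =>
      intro h
      have hnM : n < M := by omega
      have hmem : n + 1 ∈ Finset.Icc 1 Z := Finset.mem_Icc.2 ⟨by omega, by omega⟩
      have hrec' := hrec (n + 1) hmem
      simp only [Nat.add_sub_cancel] at hrec'
      have hcast : ((n + 1 : ℕ) : ℝ) - 1 = (n : ℝ) := by push_cast; ring
      rw [hcast] at hrec'
      have hsplit : (∏ j ∈ range (n + 1), (A1 - j * C2)) / ((n + 1).factorial : ℝ)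
          = ((∏ j ∈ range n, (A1 - j * C2)) / n.factorial) * ((A1 - n * C2) / ((n : ℝ) + 1)) := by
        rw [prod_range_succ, Nat.factorial_succ, div_mul_div_comm]
        push_cast
        rw [mul_comm ((n.factorial : ℝ)) ((n : ℝ) + 1)]
      rw [hsplit, hrec']
      have hX : 0 ≤ (A1 - n * C2) / ((n : ℝ) + 1) := by
        apply div_nonneg (hpos n hnM) (by positivity)
      have hY : (A1 - n * C2) / ((n : ℝ) + 1)
          ≤ 1 / ((n + 1 : ℕ) : ℝ) * A (n + 1) * (1 - n * B (n + 1)) := by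
        have h1 : A1 ≤ A (n + 1) := hA_ge _ hmem
        have h2 : A (n + 1) * B (n + 1) ≤ C2 := hAB_le _ hmem
        have h3 : (0:ℝ) ≤ (n : ℝ) := Nat.cast_nonneg n
        have h4 : A1 - n * C2 ≤ A (n + 1) * (1 - n * B (n + 1)) := by
          have := mul_le_mul_of_nonneg_left h2 h3
          nlinarith
        rw [show (1 : ℝ) / ((n + 1 : ℕ) : ℝ) * A (n + 1) * (1 - n * B (n + 1))
            = (A (n + 1) * (1 - n * B (n + 1))) / ((n : ℝ) + 1) by push_cast; ring]
        gcongr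
      apply mul_le_mul (ih (by omega)) hY hX (nn_nonneg n (by omega))
  -- assemble
  have hkey := gmw_key Z M hZ A1 C2 c ha0 haZ hCc hc0 hc3 hMZ hpos hMfull
  have h1 : ∑ i ∈ range (M + 1), (∏ j ∈ range i, (A1 - j * C2)) / i.factorial
      ≤ ∑ i ∈ range (M + 1), nn i := by
    apply Finset.sum_le_sum
    intro i hi
    simp only [mem_range] at hi
    exact t_le_nn i (by omega)
  have h2 : ∑ i ∈ range (M + 1), nn i ≤ ∑ i ∈ range (Z + 1), nn i := by
    apply Finset.sum_le_sum_of_subset_of_nonneg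
    · exact Finset.range_subset_range.2 (by omega)
    · intro i hi _
      exact nn_nonneg i (by simp at hi; omega)
  linarith
end
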